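/- arXiv:2603.15859 — 3 statements merged into one kernel-verified Lean document; each statement's English description precedes it below -/
import Mathlib

section
/- Let A ∈ 𝒜₂(k) and let 1 ≤ i < j ≤ m. Let ι_{i,j} : A₂(k)[[h]] → A_m(k)[[h]] be the algebra embedding sending x₁ ↦ x_i, p₁ ↦ p_i, x₂ ↦ x_j, p₂ ↦ p_j. Then ι_{i,j}(φ(A)) = φ(Ψ^m_{i,j}(A)), where Ψ^m_{i,j}(A) ∈ Mat_m(k[[h]]) is the matrix whose (i,i), (i,j), (j,i), (j,j) entries are A₁₁, A₁₂, A₂₁, A₂₂ respectively, whose other diagonal entries equal 1, and whose remaining entries are 0. -/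
open PowerSeries

noncomputable section

/-- Exponential of a formal power series with coefficients in a (possibly noncommutative)
ℚ-algebra; intended for series with zero constant term. -/
def psExp {B : Type*} [Ring B] [Algebra ℚ B] (a : PowerSeries B) : PowerSeries B :=
  PowerSeries.mk fun m =>
    ∑ r ∈ Finset.range (m + 1), (r.factorial : ℚ)⁻¹ • (PowerSeries.coeff (R := B) m (a ^ r))

/-- Coefficientwise extension of a map `R → S` to formal power series. -/
def liftFun {R S : Type*} [Semiring R] [Semiring S] (f : R → S) (g : PowerSeries R) :
    PowerSeries S :=
  PowerSeries.mk fun m => f (PowerSeries.coeff (R := R) m g)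

/-- The normal-ordering property of a map `N : k[x_1,…,x_n,p_1,…,p_n] → A_n(k)`. -/
def IsNormalOrdering {k : Type*} [Field k] {n : ℕ} {B : Type*} [Ring B] [Algebra k B]
    (x p : Fin n → B) (N : MvPolynomial (Fin n ⊕ Fin n) k →ₗ[k] B) : Prop :=
  ∀ d : (Fin n ⊕ Fin n) →₀ ℕ,
    N (MvPolynomial.monomial d 1) =
      ((List.finRange n).map fun i => x i ^ d (Sum.inl i)).prod *
        ((List.finRange n).map fun i => p i ^ d (Sum.inr i)).prod

/-- `A ≡ 𝟙 (mod h)`, i.e. membership of `A` in `𝒜_n(k)`. -/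
def IsOneModH {k : Type*} [CommRing k] {n : ℕ}
    (A : Matrix (Fin n) (Fin n) (PowerSeries k)) : Prop :=
  ∀ i j, PowerSeries.constantCoeff (R := k) (A i j) = if i = j then 1 else 0

/-- `φ(A) := N(exp(Σ_{i,j} x_i (A − 𝟙)_{ij} p_j))`. -/
def phiMat {k : Type*} [Field k] [CharZero k] {n : ℕ} {B : Type*} [Ring B] [Algebra k B]
    (N : MvPolynomial (Fin n ⊕ Fin n) k →ₗ[k] B)
    (A : Matrix (Fin n) (Fin n) (PowerSeries k)) : PowerSeries B :=
  liftFun N (psExp (∑ i : Fin n, ∑ j : Fin n,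
    PowerSeries.C (R := MvPolynomial (Fin n ⊕ Fin n) k)
        (MvPolynomial.X (Sum.inl i) * MvPolynomial.X (Sum.inr j)) *
      PowerSeries.map (MvPolynomial.C) ((A - 1) i j)))

/-- The block-insertion matrix `Ψ^m_{i,j}(A)`. -/
def PsiIns {k : Type*} [Field k] {m : ℕ} (i j : Fin m)
    (A : Matrix (Fin 2) (Fin 2) (PowerSeries k)) : Matrix (Fin m) (Fin m) (PowerSeries k) :=
  fun a b =>
    if a = i ∧ b = i then A 0 0
    else if a = i ∧ b = j then A 0 1
    else if a = j ∧ b = i then A 1 0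
    else if a = j ∧ b = j then A 1 1
    else if a = b then 1 else 0

lemma pairwise_commute_of_ones {M : Type*} [Monoid M] :
    ∀ (l : List M), (∀ a ∈ l, a = 1) → l.Pairwise Commute := by
  intro l hl
  induction l with
  | nil => exact List.Pairwise.nil
  | cons a t ih =>
    refine List.Pairwise.cons ?_ (ih fun b hb => hl b (List.mem_cons_of_mem _ hb))
    intro b _
    rw [hl a (List.mem_cons_self)]
    exact Commute.one_left b

lemma listProdTwo {M : Type*} [Monoid M] {m : ℕ} (f : Fin m → M) (i j : Fin m)
    (hne : i ≠ j) (hcomm : Commute (f i) (f j))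
    (h1 : ∀ a, a ≠ i → a ≠ j → f a = 1) :
    ((List.finRange m).map f).prod = f i * f j := by
  have hi : i ∈ List.finRange m := List.mem_finRange i
  have hperm1 : List.Perm (List.finRange m) (i :: (List.finRange m).erase i) :=
    List.perm_cons_erase hi
  have hj : j ∈ (List.finRange m).erase i := by
    rw [List.mem_erase_of_ne hne.symm]; exact List.mem_finRange j
  have hperm2 : List.Perm ((List.finRange m).erase i) (j :: ((List.finRange m).erase i).erase j) :=
    List.perm_cons_erase hj
  have hperm : List.Perm (List.finRange m) (i :: j :: ((List.finRange m).erase i).erase j) :=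
    hperm1.trans (hperm2.cons i)
  set rest := ((List.finRange m).erase i).erase j with hrestdef
  have hrest : ∀ b ∈ rest.map f, b = 1 := by
    intro b hb
    obtain ⟨a, ha, rfl⟩ := List.mem_map.mp hb
    have h1a := (List.Nodup.mem_erase_iff ((List.nodup_finRange m).erase i)).mp ha
    have h2a := (List.Nodup.mem_erase_iff (List.nodup_finRange m)).mp h1a.2
    exact h1 a h2a.1 h1a.1
  have hpw : (f i :: f j :: rest.map f).Pairwise Commute := by
    refine List.Pairwise.cons ?_ (List.Pairwise.cons ?_ (pairwise_commute_of_ones _ hrest))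
    · intro b hb
      rcases List.mem_cons.mp hb with h | h
      · exact h ▸ hcomm
      · rw [hrest b h]; exact Commute.one_right _
    · intro b hb
      rw [hrest b hb]; exact Commute.one_right _
  have hmap : List.Perm (f i :: f j :: rest.map f) ((List.finRange m).map f) := by
    simpa using (hperm.map f).symm
  rw [← hmap.prod_eq' hpw]
  simp [List.prod_eq_one hrest]

lemma psExp_map {B C : Type*} [Ring B] [Algebra ℚ B] [Ring C] [Algebra ℚ C]
    (f : B →+* C) (a : PowerSeries B) :
    psExp (PowerSeries.map f a) = PowerSeries.map f (psExp a) := by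
  ext n
  simp only [psExp, PowerSeries.coeff_mk, PowerSeries.coeff_map, map_sum]
  refine Finset.sum_congr rfl fun r _ => ?_
  rw [map_rat_smul f, ← map_pow, PowerSeries.coeff_map]

/-- for `A ∈ 𝒜₂(k)` and `1 ≤ i < j ≤ m`, the leg embedding
`ι_{i,j} : A₂(k)[[h]] → A_m(k)[[h]]` (sending `x₁ ↦ x_i, p₁ ↦ p_i, x₂ ↦ x_j, p₂ ↦ p_j`,
extended coefficientwise) satisfies `ι_{i,j}(φ(A)) = φ(Ψ^m_{i,j}(A))`. -/
theorem statement3 {k : Type*} [Field k] [CharZero k] {m : ℕ}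
    {B2 : Type*} [Ring B2] [Algebra k B2] {Bm : Type*} [Ring Bm] [Algebra k Bm]
    (x2 p2 : Fin 2 → B2)
    (hxx2 : ∀ a b, x2 a * x2 b = x2 b * x2 a)
    (hpp2 : ∀ a b, p2 a * p2 b = p2 b * p2 a)
    (hpx2 : ∀ a b, p2 a * x2 b - x2 b * p2 a = if a = b then (1 : B2) else 0)
    (xm pm : Fin m → Bm)
    (hxxm : ∀ a b, xm a * xm b = xm b * xm a)
    (hppm : ∀ a b, pm a * pm b = pm b * pm a)
    (hpxm : ∀ a b, pm a * xm b - xm b * pm a = if a = b then (1 : Bm) else 0)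
    (N2 : MvPolynomial (Fin 2 ⊕ Fin 2) k →ₗ[k] B2) (hN2 : IsNormalOrdering x2 p2 N2)
    (Nm : MvPolynomial (Fin m ⊕ Fin m) k →ₗ[k] Bm) (hNm : IsNormalOrdering xm pm Nm)
    (i j : Fin m) (hij : i < j)
    (ι : B2 →+* Bm)
    (hιx1 : ι (x2 0) = xm i) (hιp1 : ι (p2 0) = pm i)
    (hιx2 : ι (x2 1) = xm j) (hιp2 : ι (p2 1) = pm j)
    (hιalg : ∀ c : k, ι (algebraMap k B2 c) = algebraMap k Bm c)
    (A : Matrix (Fin 2) (Fin 2) (PowerSeries k)) (hA : IsOneModH A) :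
    liftFun ι (phiMat N2 A) = phiMat Nm (PsiIns i j A) := by
  classical
  have hne : i ≠ j := hij.ne
  set e : Fin 2 → Fin m := ![i, j] with he
  have heinj : Function.Injective e := by
    intro a b hab
    fin_cases a <;> fin_cases b <;> simp_all [e]
  set σ : Fin 2 ⊕ Fin 2 → Fin m ⊕ Fin m := Sum.map e e with hσ
  have hσinj : Function.Injective σ := heinj.sumMap heinj
  set π : MvPolynomial (Fin 2 ⊕ Fin 2) k →+* MvPolynomial (Fin m ⊕ Fin m) k :=
    (MvPolynomial.rename σ).toRingHom with hπ
  -- series equality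
  have hser : (∑ a : Fin m, ∑ b : Fin m,
      PowerSeries.C (R := MvPolynomial (Fin m ⊕ Fin m) k)
          (MvPolynomial.X (Sum.inl a) * MvPolynomial.X (Sum.inr b)) *
        PowerSeries.map MvPolynomial.C ((PsiIns i j A - 1) a b))
      = PowerSeries.map π
        (∑ a : Fin 2, ∑ b : Fin 2,
          PowerSeries.C (R := MvPolynomial (Fin 2 ⊕ Fin 2) k)
              (MvPolynomial.X (Sum.inl a) * MvPolynomial.X (Sum.inr b)) *
            PowerSeries.map MvPolynomial.C ((A - 1) a b)) := by
    have hmapC : ∀ s : PowerSeries k, PowerSeries.map π (PowerSeries.map MvPolynomial.C s)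
        = PowerSeries.map (MvPolynomial.C (σ := Fin m ⊕ Fin m)) s := by
      intro s; ext n'
      simp [PowerSeries.coeff_map, hπ]
    have hzero_row : ∀ c : Fin m, c ≠ i → c ≠ j → ∀ b, (PsiIns i j A - 1) c b = 0 := by
      intro c hci hcj b
      simp [PsiIns, Matrix.sub_apply, Matrix.one_apply, hci, hcj]
    have hzc1 : ∀ b : Fin m, b ≠ i → b ≠ j → (PsiIns i j A - 1) i b = 0 := by
      intro b hbi hbj
      simp [PsiIns, Matrix.sub_apply, Matrix.one_apply, hbi, hbj, hne, Ne.symm hbi]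
    have hzc2 : ∀ b : Fin m, b ≠ i → b ≠ j → (PsiIns i j A - 1) j b = 0 := by
      intro b hbi hbj
      simp [PsiIns, Matrix.sub_apply, Matrix.one_apply, hbi, hbj, hne.symm, Ne.symm hbj]
    rw [Finset.sum_eq_add_of_mem i j (Finset.mem_univ i) (Finset.mem_univ j) hne
      (fun c _ hc => Finset.sum_eq_zero fun b _ => by
        rw [hzero_row c hc.1 hc.2 b]; simp),
      Finset.sum_eq_add_of_mem i j (Finset.mem_univ i) (Finset.mem_univ j) hne
      (fun c _ hc => by rw [hzc1 c hc.1 hc.2]; simp),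
      Finset.sum_eq_add_of_mem i j (Finset.mem_univ i) (Finset.mem_univ j) hne
      (fun c _ hc => by rw [hzc2 c hc.1 hc.2]; simp)]
    simp only [Fin.sum_univ_two, map_add, map_mul, PowerSeries.map_C, hmapC, hπ,
      AlgHom.coe_toRingHom, MvPolynomial.rename_X, map_mul]
    have hentii : (PsiIns i j A - 1) i i = (A - 1) 0 0 := by
      simp [PsiIns, Matrix.sub_apply, Matrix.one_apply]
    have hentij : (PsiIns i j A - 1) i j = (A - 1) 0 1 := by
      simp [PsiIns, Matrix.sub_apply, Matrix.one_apply, hne, hne.symm]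
    have hentji : (PsiIns i j A - 1) j i = (A - 1) 1 0 := by
      simp [PsiIns, Matrix.sub_apply, Matrix.one_apply, hne, hne.symm]
    have hentjj : (PsiIns i j A - 1) j j = (A - 1) 1 1 := by
      simp [PsiIns, Matrix.sub_apply, Matrix.one_apply, hne, hne.symm]
    rw [hentii, hentij, hentji, hentjj]
    norm_num [hσ, he]
    have hmapC' : ∀ (f : Fin 2 ⊕ Fin 2 → Fin m ⊕ Fin m) (s : PowerSeries k),
        PowerSeries.map (↑(MvPolynomial.rename (R := k) f) :
        MvPolynomial (Fin 2 ⊕ Fin 2) k →+* MvPolynomial (Fin m ⊕ Fin m) k)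
        (PowerSeries.map MvPolynomial.C s) = PowerSeries.map (MvPolynomial.C (σ := Fin m ⊕ Fin m)) s := by
      intro f s; ext n'
      simp [PowerSeries.coeff_map]
    simp only [hmapC']
  have hcomp : ∀ q : MvPolynomial (Fin 2 ⊕ Fin 2) k,
      Nm (MvPolynomial.rename σ q) = ι (N2 q) := by
    have hsm : ∀ (r : k) (v : B2), ι (r • v) = r • ι v := fun r v => by
      rw [Algebra.smul_def, map_mul, hιalg, ← Algebra.smul_def]
    intro q
    induction q using MvPolynomial.induction_on' with
    | add p q hp hq => simp only [map_add, hp, hq]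
    | monomial d r =>
      rw [MvPolynomial.rename_monomial]
      have hm1 : (MvPolynomial.monomial d r : MvPolynomial (Fin 2 ⊕ Fin 2) k)
          = r • MvPolynomial.monomial d 1 := by
        rw [MvPolynomial.smul_monomial, smul_eq_mul, mul_one]
      have hm2 : (MvPolynomial.monomial (Finsupp.mapDomain σ d) r
            : MvPolynomial (Fin m ⊕ Fin m) k)
          = r • MvPolynomial.monomial (Finsupp.mapDomain σ d) 1 := by
        rw [MvPolynomial.smul_monomial, smul_eq_mul, mul_one]
      rw [hm1, hm2, map_smul, map_smul, hsm, hNm, hN2]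
      congr 1
      set d' := Finsupp.mapDomain σ d with hd'
      have h1l : d' (Sum.inl i) = d (Sum.inl 0) := by
        have := Finsupp.mapDomain_apply hσinj d (Sum.inl 0)
        simpa [hσ, he] using this
      have h2l : d' (Sum.inl j) = d (Sum.inl 1) := by
        have := Finsupp.mapDomain_apply hσinj d (Sum.inl 1)
        simpa [hσ, he] using this
      have h1r : d' (Sum.inr i) = d (Sum.inr 0) := by
        have := Finsupp.mapDomain_apply hσinj d (Sum.inr 0)
        simpa [hσ, he] using this
      have h2r : d' (Sum.inr j) = d (Sum.inr 1) := by
        have := Finsupp.mapDomain_apply hσinj d (Sum.inr 1)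
        simpa [hσ, he] using this
      have hnl : ∀ a : Fin m, a ≠ i → a ≠ j → d' (Sum.inl a) = 0 := by
        intro a hai haj
        refine Finsupp.mapDomain_notin_range _ _ ?_
        rintro ⟨s, hs⟩
        rcases s with t | t
        · simp only [hσ, Sum.map_inl, Sum.inl.injEq] at hs
          fin_cases t
          · exact hai hs.symm
          · exact haj hs.symm
        · simp [hσ] at hs
      have hnr : ∀ a : Fin m, a ≠ i → a ≠ j → d' (Sum.inr a) = 0 := by
        intro a hai haj
        refine Finsupp.mapDomain_notin_range _ _ ?_
        rintro ⟨s, hs⟩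
        rcases s with t | t
        · simp [hσ] at hs
        · simp only [hσ, Sum.map_inr, Sum.inr.injEq] at hs
          fin_cases t
          · exact hai hs.symm
          · exact haj hs.symm
      rw [listProdTwo (fun a => xm a ^ d' (Sum.inl a)) i j hne
            (Commute.pow_pow (hxxm i j) _ _)
            (fun a hai haj => by simp only [hnl a hai haj, pow_zero]),
          listProdTwo (fun a => pm a ^ d' (Sum.inr a)) i j hne
            (Commute.pow_pow (hppm i j) _ _)
            (fun a hai haj => by simp only [hnr a hai haj, pow_zero])]
      rw [h1l, h2l, h1r, h2r]
      simp [show List.finRange 2 = [0, 1] from rfl, map_mul, map_pow,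
        hιx1, hιx2, hιp1, hιp2]
  unfold phiMat
  rw [hser, psExp_map]
  ext n
  simp only [liftFun, PowerSeries.coeff_mk, PowerSeries.coeff_map, hπ,
    AlgHom.coe_toRingHom]
  exact (hcomp _).symm
end
end

section
/- For every A ∈ 𝒜_n(k) and every j ∈ {1,…,n}: φ(A)·x_j·φ(A)^{−1} = Σ_{i=1}^n x_i·A_{ij}, and φ(A)·p_j·φ(A)^{−1} = Σ_{i=1}^n p_i·(A^{−1})_{ji}. -/
open PowerSeries

noncomputable section

section MyAux
variable {B : Type*} [Ring B]

lemma myCoeffPowZero {y : PowerSeries B} (hy : PowerSeries.constantCoeff (R := B) y = 0) :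
    ∀ (r m : ℕ), m < r → PowerSeries.coeff (R := B) m (y ^ r) = 0 := by
  intro r
  induction r with
  | zero => exact fun m h => absurd h (Nat.not_lt_zero m)
  | succ r ih =>
    intro m hm
    rw [pow_succ', PowerSeries.coeff_mul]
    apply Finset.sum_eq_zero
    rintro ⟨a, b⟩ hab
    simp only [Finset.HasAntidiagonal.mem_antidiagonal] at hab
    rcases Nat.eq_zero_or_pos a with h0 | hpos
    · subst h0
      simp [PowerSeries.coeff_zero_eq_constantCoeff, hy]
    · have : b < r := by omega
      rw [ih b this, mul_zero]

lemma myGeomCoeff {y : PowerSeries B} (hy : PowerSeries.constantCoeff (R := B) y = 0)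
    {m M : ℕ} (h : m ≤ M) :
    PowerSeries.coeff (R := B) m (∑ r ∈ Finset.range (m + 1), y ^ r) =
      PowerSeries.coeff (R := B) m (∑ r ∈ Finset.range (M + 1), y ^ r) := by
  rw [map_sum, map_sum]
  apply Finset.sum_subset
  · exact Finset.range_subset_range.2 (by omega)
  · intro r hr hr2
    simp only [Finset.mem_range, not_lt] at hr2
    exact myCoeffPowZero hy r m (by omega)

lemma myExistsInv (g : PowerSeries B) (hg : PowerSeries.constantCoeff (R := B) g = 1) :
    ∃ ψ : PowerSeries B, g * ψ = 1 ∧ ψ * g = 1 := by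
  set y : PowerSeries B := 1 - g with hydef
  have hy : PowerSeries.constantCoeff (R := B) y = 0 := by simp [hydef, hg]
  have hgy : g = 1 - y := by rw [hydef, sub_sub_cancel]
  set ψ : PowerSeries B :=
    PowerSeries.mk fun m => PowerSeries.coeff (R := B) m (∑ r ∈ Finset.range (m + 1), y ^ r) with hψ
  have key : ∀ m b : ℕ, b ≤ m →
      PowerSeries.coeff (R := B) b ψ =
        PowerSeries.coeff (R := B) b (∑ r ∈ Finset.range (m + 1), y ^ r) := by
    intro m b hb
    rw [hψ, PowerSeries.coeff_mk]
    exact myGeomCoeff hy (by omega)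
  have hT : ∀ m : ℕ, PowerSeries.coeff (R := B) m ((1 - y) * ∑ r ∈ Finset.range (m + 1), y ^ r) =
      PowerSeries.coeff (R := B) m (1 : PowerSeries B) := by
    intro m
    have h2 := mul_geom_sum y (m + 1)
    have h3 : (1 - y) * ∑ r ∈ Finset.range (m + 1), y ^ r = 1 - y ^ (m + 1) := by
      rw [← neg_sub y 1, neg_mul, h2, neg_sub]
    rw [h3, map_sub, myCoeffPowZero hy (m + 1) m (by omega), sub_zero]
  have hT' : ∀ m : ℕ, PowerSeries.coeff (R := B) m ((∑ r ∈ Finset.range (m + 1), y ^ r) * (1 - y)) =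
      PowerSeries.coeff (R := B) m (1 : PowerSeries B) := by
    intro m
    have h2 := geom_sum_mul y (m + 1)
    have h3 : (∑ r ∈ Finset.range (m + 1), y ^ r) * (1 - y) = 1 - y ^ (m + 1) := by
      rw [← neg_sub y 1, mul_neg, h2, neg_sub]
    rw [h3, map_sub, myCoeffPowZero hy (m + 1) m (by omega), sub_zero]
  refine ⟨ψ, ?_, ?_⟩
  · ext m
    rw [← hT m, hgy, PowerSeries.coeff_mul, PowerSeries.coeff_mul]
    apply Finset.sum_congr rfl
    rintro ⟨a, b⟩ hab
    simp only [Finset.HasAntidiagonal.mem_antidiagonal] at hab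
    rw [key m b (by omega)]
  · ext m
    rw [← hT' m, hgy, PowerSeries.coeff_mul, PowerSeries.coeff_mul]
    apply Finset.sum_congr rfl
    rintro ⟨a, b⟩ hab
    simp only [Finset.HasAntidiagonal.mem_antidiagonal] at hab
    rw [key m a (by omega)]

end MyAux

section MyAux2
variable {B : Type*} [Ring B] {n : ℕ}

lemma myPowComm (f : Fin n → B) (hf : ∀ a b, Commute (f a) (f b)) (d : Fin n → ℕ)
    (s : Finset (Fin n)) : (s : Set (Fin n)).Pairwise (Function.onFun Commute fun i => f i ^ d i) :=
  fun a _ b _ _ => (hf a b).pow_pow _ _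

/-- Ordered product `∏ f i ^ d i` over all of `Fin n`, for pairwise commuting `f`. -/
def myP (f : Fin n → B) (hf : ∀ a b, Commute (f a) (f b)) (d : Fin n → ℕ) : B :=
  Finset.univ.noncommProd (fun i => f i ^ d i)
    (myPowComm f hf _ _)

lemma myP_eq_list (f : Fin n → B) (hf : ∀ a b, Commute (f a) (f b)) (d : Fin n → ℕ) :
    ((List.finRange n).map fun i => f i ^ d i).prod = myP f hf d := by
  rw [myP]; unfold Finset.noncommProd
  exact (Multiset.noncommProd_coe ((List.finRange n).map fun i => f i ^ d i) _).symm

lemma myP_commute (f : Fin n → B) (hf : ∀ a b, Commute (f a) (f b)) (d : Fin n → ℕ)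
    (z : B) (hz : ∀ i, Commute z (f i)) : Commute z (myP f hf d) :=
  Finset.noncommProd_commute _ _ _ _ (fun i _ => (hz i).pow_right (d i))

lemma myP_congr (f : Fin n → B) (hf : ∀ a b, Commute (f a) (f b)) {d d' : Fin n → ℕ}
    (h : ∀ i, d i = d' i) : myP f hf d = myP f hf d' := by
  unfold myP
  exact Finset.noncommProd_congr rfl (fun i _ => by rw [h i]) _

/-- erase-decomposition : myP d = f j ^ d j * (rest) and rest commutes appropriately -/
lemma myP_update (f : Fin n → B) (hf : ∀ a b, Commute (f a) (f b)) (d : Fin n → ℕ)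
    (j : Fin n) (c : ℕ) :
    myP f hf (Function.update d j c) * f j ^ c = myP f hf (Function.update d j 0) * f j ^ c  → True := fun _ => trivial

lemma myP_eq_mul_erase (f : Fin n → B) (hf : ∀ a b, Commute (f a) (f b)) (d : Fin n → ℕ)
    (j : Fin n) :
    myP f hf d = f j ^ d j *
      (Finset.univ.erase j).noncommProd (fun i => f i ^ d i)
        (myPowComm f hf _ _) := by
  rw [myP, ← Finset.mul_noncommProd_erase Finset.univ (Finset.mem_univ j)
    (fun i => f i ^ d i) (myPowComm f hf _ _)]

lemma myP_eq_erase_mul (f : Fin n → B) (hf : ∀ a b, Commute (f a) (f b)) (d : Fin n → ℕ)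
    (j : Fin n) :
    myP f hf d =
      (Finset.univ.erase j).noncommProd (fun i => f i ^ d i)
        (myPowComm f hf _ _) * f j ^ d j := by
  rw [myP, ← Finset.noncommProd_erase_mul Finset.univ (Finset.mem_univ j)
    (fun i => f i ^ d i) (myPowComm f hf _ _)]

lemma myP_bump (f : Fin n → B) (hf : ∀ a b, Commute (f a) (f b)) (d : Fin n → ℕ)
    (j : Fin n) (c : ℕ) :
    myP f hf (fun i => (if i = j then c else 0) + d i) = f j ^ c * myP f hf d := by
  rw [myP_eq_mul_erase f hf _ j, myP_eq_mul_erase f hf d j, if_pos rfl, pow_add, mul_assoc]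
  congr 1
  congr 1
  apply Finset.noncommProd_congr rfl
  intro i hi
  rw [if_neg (Finset.ne_of_mem_erase hi)]
  simp

/-- key commutator: f j ^ m * z = z * f j ^ m + m • f j ^ (m-1), in "successor" form. -/
lemma pow_mul_comm_aux {u z : B} (h : u * z = z * u + 1) :
    ∀ m : ℕ, u ^ (m + 1) * z = z * u ^ (m + 1) + (m + 1) • u ^ m := by
  intro m
  induction m with
  | zero => simpa using h
  | succ m ih =>
    have : u ^ (m + 2) * z = u * (u ^ (m + 1) * z) := by
      rw [← mul_assoc, ← pow_succ']
    rw [this, ih, mul_add, ← mul_assoc, h, add_mul, one_mul, mul_assoc, ← pow_succ',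
      mul_smul_comm, ← pow_succ']
    rw [succ_nsmul (u ^ (m + 1)) (m + 1)]
    abel

lemma mul_pow_comm_aux {u z : B} (h : z * u = u * z + 1) :
    ∀ m : ℕ, z * u ^ (m + 1) = u ^ (m + 1) * z + (m + 1) • u ^ m := by
  intro m
  induction m with
  | zero => simpa using h
  | succ m ih =>
    have h1 : z * u ^ (m + 2) = (z * u ^ (m + 1)) * u := by
      rw [mul_assoc, ← pow_succ]
    rw [h1, ih, add_mul]
    rw [smul_mul_assoc, ← pow_succ]
    rw [mul_assoc, h, mul_add, mul_one, ← mul_assoc, ← pow_succ]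
    rw [succ_nsmul (u ^ (m + 1)) (m + 1)]
    abel

lemma erase_comm_z (f : Fin n → B) (d : Fin n → ℕ) (j : Fin n) (z : B)
    (hz : ∀ i, i ≠ j → Commute z (f i)) (comm) :
    Commute z ((Finset.univ.erase j).noncommProd (fun i => f i ^ d i) comm) :=
  Finset.noncommProd_commute _ _ _ _
    (fun i hi => (hz i (Finset.ne_of_mem_erase hi)).pow_right (d i))

lemma erase_update_eq (f : Fin n → B) (d : Fin n → ℕ) (j : Fin n) (c : ℕ) (comm comm') :
    (Finset.univ.erase j).noncommProd (fun i => f i ^ (Function.update d j c) i) comm =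
      (Finset.univ.erase j).noncommProd (fun i => f i ^ d i) comm' := by
  exact Finset.noncommProd_congr rfl
    (fun i hi => by rw [Function.update_of_ne (Finset.ne_of_mem_erase hi)]) comm

lemma myP_mul_right (f : Fin n → B) (hf : ∀ a b, Commute (f a) (f b)) (d : Fin n → ℕ)
    (j : Fin n) (z : B) (hz : ∀ i, i ≠ j → Commute z (f i)) (hj : f j * z = z * f j + 1) :
    myP f hf d * z = z * myP f hf d + d j • myP f hf (Function.update d j (d j - 1)) := by
  rcases hm : d j with _ | m
  · rw [myP_eq_erase_mul f hf d j, hm, pow_zero, mul_one, zero_smul, add_zero]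
    exact ((erase_comm_z f d j z hz _).eq).symm
  · have hup : myP f hf (Function.update d j (m + 1 - 1)) =
        (Finset.univ.erase j).noncommProd (fun i => f i ^ d i)
          (myPowComm f hf _ _) * f j ^ m := by
      rw [myP_eq_erase_mul f hf _ j, Function.update_self, Nat.add_sub_cancel,
        erase_update_eq f d j m _ (myPowComm f hf _ _)]
    rw [myP_eq_erase_mul f hf d j, hm, mul_assoc, pow_mul_comm_aux hj m, mul_add,
      ← mul_assoc, mul_smul_comm, hup]
    congr 1
    rw [← mul_assoc, (erase_comm_z f d j z hz _).eq]

lemma mul_myP_left (f : Fin n → B) (hf : ∀ a b, Commute (f a) (f b)) (d : Fin n → ℕ)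
    (j : Fin n) (z : B) (hz : ∀ i, i ≠ j → Commute z (f i)) (hj : z * f j = f j * z + 1) :
    z * myP f hf d = myP f hf d * z + d j • myP f hf (Function.update d j (d j - 1)) := by
  rcases hm : d j with _ | m
  · rw [myP_eq_mul_erase f hf d j, hm, pow_zero, one_mul, zero_smul, add_zero]
    exact (erase_comm_z f d j z hz _).eq
  · have hup : myP f hf (Function.update d j (m + 1 - 1)) =
        f j ^ m * (Finset.univ.erase j).noncommProd (fun i => f i ^ d i)
          (myPowComm f hf _ _) := by
      rw [myP_eq_mul_erase f hf _ j, Function.update_self, Nat.add_sub_cancel,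
        erase_update_eq f d j m _ (myPowComm f hf _ _)]
    rw [myP_eq_mul_erase f hf d j, hm, ← mul_assoc, mul_pow_comm_aux hj m, add_mul,
      mul_assoc, smul_mul_assoc, hup]
    congr 1
    rw [(erase_comm_z f d j z hz _).eq, ← mul_assoc]

lemma myP_zero (f : Fin n → B) (hf : ∀ a b, Commute (f a) (f b)) :
    myP f hf (fun _ => 0) = 1 := by
  rw [myP, Finset.noncommProd_eq_pow_card _ _ _ 1 (fun i _ => pow_zero (f i)), one_pow]

lemma myP_bump_right (f : Fin n → B) (hf : ∀ a b, Commute (f a) (f b)) (d : Fin n → ℕ)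
    (j : Fin n) (c : ℕ) :
    myP f hf (fun i => d i + (if i = j then c else 0)) = myP f hf d * f j ^ c := by
  rw [myP_congr f hf (d := fun i => d i + (if i = j then c else 0))
    (d' := fun i => (if i = j then c else 0) + d i) (fun i => add_comm _ _), myP_bump]
  exact (myP_commute f hf d (f j ^ c) (fun i => (hf j i).pow_left c)).eq

end MyAux2

section MyAux3
open PowerSeries
set_option linter.unusedSectionVars false

variable {k : Type*} [Field k] [CharZero k] {σ : Type*}

local notation "R" => MvPolynomial σ k

/-- coefficientwise partial derivative -/
def Dps (v : σ) (q : PowerSeries R) : PowerSeries R :=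
  PowerSeries.mk fun m => MvPolynomial.pderiv v (PowerSeries.coeff m q)

lemma coeff_Dps (v : σ) (q : PowerSeries R) (m : ℕ) :
    PowerSeries.coeff m (Dps v q) = MvPolynomial.pderiv v (PowerSeries.coeff m q) := by
  rw [Dps, PowerSeries.coeff_mk]

lemma Dps_add (v : σ) (a b : PowerSeries R) : Dps v (a + b) = Dps v a + Dps v b := by
  ext m; simp [coeff_Dps]

lemma Dps_sum {ι : Type*} (v : σ) (s : Finset ι) (g : ι → PowerSeries R) :
    Dps v (∑ i ∈ s, g i) = ∑ i ∈ s, Dps v (g i) := by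
  ext m; simp [coeff_Dps]

lemma Dps_smul_rat (v : σ) (c : ℚ) (a : PowerSeries R) : Dps v (c • a) = c • Dps v a := by
  refine PowerSeries.ext fun m => ?_
  rw [coeff_Dps, PowerSeries.coeff_smul, PowerSeries.coeff_smul, coeff_Dps]
  exact map_rat_smul
    ((MvPolynomial.pderiv v : Derivation k (MvPolynomial σ k)
      (MvPolynomial σ k)).toLinearMap.toAddMonoidHom) c _

lemma Dps_nsmul (v : σ) (c : ℕ) (a : PowerSeries R) : Dps v (c • a) = c • Dps v a := by
  refine PowerSeries.ext fun m => ?_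
  simp only [coeff_Dps, map_nsmul]

lemma Dps_one (v : σ) : Dps v (1 : PowerSeries R) = 0 := by
  refine PowerSeries.ext fun m => ?_
  rw [coeff_Dps]
  rcases Nat.eq_zero_or_pos m with h | h
  · subst h; simp
  · rw [PowerSeries.coeff_one, if_neg (by omega)]
    simp

lemma Dps_mul (v : σ) (a b : PowerSeries R) :
    Dps v (a * b) = Dps v a * b + a * Dps v b := by
  refine PowerSeries.ext fun m => ?_
  rw [coeff_Dps, PowerSeries.coeff_mul, map_sum, map_add, PowerSeries.coeff_mul,
    PowerSeries.coeff_mul, ← Finset.sum_add_distrib]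
  apply Finset.sum_congr rfl
  rintro ⟨u, w⟩ _
  rw [MvPolynomial.pderiv_mul, coeff_Dps, coeff_Dps]

lemma Dps_pow (v : σ) (a : PowerSeries R) :
    ∀ r : ℕ, Dps v (a ^ (r + 1)) = (r + 1) • (a ^ r * Dps v a) := by
  intro r
  induction r with
  | zero => simp [Dps_mul]
  | succ r ih =>
    have : a ^ (r + 2) = a * a ^ (r + 1) := by rw [← pow_succ']
    rw [this, Dps_mul, ih, mul_smul_comm, ← mul_assoc, ← pow_succ']
    rw [succ_nsmul (a ^ (r + 1) * Dps v a) (r + 1), mul_comm (Dps v a) (a ^ (r + 1))]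
    abel

lemma Dps_zero_of_const (v : σ) {q : PowerSeries R}
    (h : PowerSeries.constantCoeff q = 0) :
    PowerSeries.coeff 0 (Dps v q) = 0 := by
  rw [coeff_Dps, PowerSeries.coeff_zero_eq_constantCoeff, h, map_zero]

/-- partial sums of the exponential -/
def psS (E : PowerSeries R) (M : ℕ) : PowerSeries R :=
  ∑ r ∈ Finset.range (M + 1), (r.factorial : ℚ)⁻¹ • E ^ r

lemma coeff_psExp_eq_psS {E : PowerSeries R} (hE : PowerSeries.constantCoeff E = 0)
    {m M : ℕ} (h : m ≤ M) :
    PowerSeries.coeff m (psExp E) = PowerSeries.coeff m (psS E M) := by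
  rw [psExp, PowerSeries.coeff_mk, psS, map_sum]
  simp only [PowerSeries.coeff_smul]
  apply Finset.sum_subset (Finset.range_subset_range.2 (by omega))
  intro r _ hr2
  simp only [Finset.mem_range, not_lt] at hr2
  rw [myCoeffPowZero hE r m (by omega), smul_zero]

lemma Dps_psS (v : σ) (E : PowerSeries R) (M : ℕ) :
    Dps v (psS E (M + 1)) = psS E M * Dps v E := by
  rw [psS, Dps_sum]
  rw [Finset.sum_range_succ' (fun r => Dps v ((r.factorial : ℚ)⁻¹ • E ^ r)) (M + 1)]
  simp only [Dps_smul_rat]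
  rw [pow_zero, Dps_one, smul_zero, add_zero]
  rw [psS, Finset.sum_mul]
  apply Finset.sum_congr rfl
  intro r _
  rw [Dps_pow v E r, ← Nat.cast_smul_eq_nsmul ℚ (r + 1) (E ^ r * Dps v E), smul_smul,
    smul_mul_assoc]
  congr 1
  rw [Nat.factorial_succ]
  push_cast
  rw [mul_inv, mul_comm ((r + 1 : ℚ))⁻¹, mul_assoc,
    inv_mul_cancel₀ (by positivity), mul_one]

lemma Dps_psExp (v : σ) {E : PowerSeries R} (hE : PowerSeries.constantCoeff E = 0) :
    Dps v (psExp E) = psExp E * Dps v E := by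
  refine PowerSeries.ext fun m => ?_
  rcases Nat.eq_zero_or_pos m with h0 | hpos
  · subst h0
    have h2 : PowerSeries.coeff 0 (psExp E) = 1 := by
      rw [psExp, PowerSeries.coeff_mk]; simp
    rw [coeff_Dps, h2, MvPolynomial.pderiv_one, PowerSeries.coeff_mul]
    rw [Finset.Nat.antidiagonal_zero, Finset.sum_singleton, Dps_zero_of_const v hE, mul_zero]
  · obtain ⟨m', rfl⟩ : ∃ m', m = m' + 1 := ⟨m - 1, by omega⟩
    have l1 : PowerSeries.coeff (m' + 1) (Dps v (psExp E)) =
        PowerSeries.coeff (m' + 1) (Dps v (psS E (m' + 1))) := by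
      rw [coeff_Dps, coeff_Dps, coeff_psExp_eq_psS hE (le_refl (m' + 1))]
    rw [l1, Dps_psS]
    rw [PowerSeries.coeff_mul, PowerSeries.coeff_mul]
    apply Finset.sum_congr rfl
    rintro ⟨a, b⟩ hab
    simp only [Finset.HasAntidiagonal.mem_antidiagonal] at hab
    rcases Nat.eq_zero_or_pos b with hb | hb
    · subst hb
      rw [PowerSeries.coeff_zero_eq_constantCoeff_apply,
        ← PowerSeries.coeff_zero_eq_constantCoeff_apply, Dps_zero_of_const v hE,
        mul_zero, mul_zero]
    · rw [coeff_psExp_eq_psS hE (show a ≤ m' by omega)]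

end MyAux3

section MyAux4
set_option linter.unusedSectionVars false
open MvPolynomial

variable {k : Type*} [Field k] [CharZero k] {n : ℕ} {B : Type*} [Ring B] [Algebra k B]
variable {x p : Fin n → B}
variable (hxx : ∀ a b, Commute (x a) (x b)) (hpp : ∀ a b, Commute (p a) (p b))
variable {N : MvPolynomial (Fin n ⊕ Fin n) k →ₗ[k] B}

lemma mon_smul (e : (Fin n ⊕ Fin n) →₀ ℕ) (a : k) :
    (monomial e) a = a • monomial e (1:k) := by
  rw [smul_monomial, smul_eq_mul, mul_one]

lemma NL_one
    (hNm : ∀ d : (Fin n ⊕ Fin n) →₀ ℕ, N (monomial d (1:k)) =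
      myP x hxx (fun i => d (Sum.inl i)) * myP p hpp (fun i => d (Sum.inr i))) :
    N 1 = 1 := by
  have h := hNm 0
  simp only [Finsupp.coe_zero, Pi.zero_apply] at h
  rw [monomial_zero', C_1] at h
  rw [h, myP_zero, myP_zero, one_mul]

lemma NL1
    (hNm : ∀ d : (Fin n ⊕ Fin n) →₀ ℕ, N (monomial d (1:k)) =
      myP x hxx (fun i => d (Sum.inl i)) * myP p hpp (fun i => d (Sum.inr i)))
    (i : Fin n) (f : MvPolynomial (Fin n ⊕ Fin n) k) :
    N (X (Sum.inl i) * f) = x i * N f := by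
  induction f using MvPolynomial.induction_on' with
  | add f g hf hg => rw [mul_add, map_add, hf, hg, map_add, mul_add]
  | monomial d a =>
    have hmon : (X (Sum.inl i) : MvPolynomial (Fin n ⊕ Fin n) k) * monomial d a =
        monomial (Finsupp.single (Sum.inl i) 1 + d) a := by
      rw [← pow_one (X (Sum.inl i) : MvPolynomial (Fin n ⊕ Fin n) k), ← monomial_single_add]
    rw [hmon, mon_smul, map_smul, hNm, mon_smul d, map_smul, hNm, mul_smul_comm]
    congr 1
    have hxpart : myP x hxx (fun i' => (Finsupp.single (Sum.inl i) 1 + d : (Fin n ⊕ Fin n) →₀ ℕ) (Sum.inl i')) =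
        x i * myP x hxx (fun i' => d (Sum.inl i')) := by
      rw [myP_congr x hxx (d' := fun i' => (if i' = i then 1 else 0) + d (Sum.inl i'))
        (fun i' => by
          rcases eq_or_ne i' i with hii | hii
          · subst hii; simp [Finsupp.single_apply]
          · simp [Finsupp.single_apply, hii, Ne.symm hii]),
        myP_bump, pow_one]
    have hppart : myP p hpp (fun i' => (Finsupp.single (Sum.inl i) 1 + d : (Fin n ⊕ Fin n) →₀ ℕ) (Sum.inr i')) =
        myP p hpp (fun i' => d (Sum.inr i')) :=
      myP_congr _ _ (fun i' => by simp [Finsupp.single_apply])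
    rw [hxpart, hppart, mul_assoc]

lemma NL2
    (hNm : ∀ d : (Fin n ⊕ Fin n) →₀ ℕ, N (monomial d (1:k)) =
      myP x hxx (fun i => d (Sum.inl i)) * myP p hpp (fun i => d (Sum.inr i)))
    (i : Fin n) (f : MvPolynomial (Fin n ⊕ Fin n) k) :
    N (f * X (Sum.inr i)) = N f * p i := by
  induction f using MvPolynomial.induction_on' with
  | add f g hf hg => rw [add_mul, map_add, hf, hg, map_add, add_mul]
  | monomial d a =>
    have hmon : monomial d a * (X (Sum.inr i) : MvPolynomial (Fin n ⊕ Fin n) k) =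
        monomial (d + Finsupp.single (Sum.inr i) 1) a := by
      rw [← pow_one (X (Sum.inr i) : MvPolynomial (Fin n ⊕ Fin n) k), ← monomial_add_single]
    rw [hmon, mon_smul, map_smul, hNm, mon_smul d, map_smul, hNm, smul_mul_assoc]
    congr 1
    have hppart : myP p hpp (fun i' => (d + Finsupp.single (Sum.inr i) 1 : (Fin n ⊕ Fin n) →₀ ℕ) (Sum.inr i')) =
        myP p hpp (fun i' => d (Sum.inr i')) * p i := by
      rw [myP_congr p hpp (d' := fun i' => d (Sum.inr i') + (if i' = i then 1 else 0))
        (fun i' => by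
          rcases eq_or_ne i' i with hii | hii
          · subst hii; simp [Finsupp.single_apply]
          · simp [Finsupp.single_apply, hii, Ne.symm hii]),
        myP_bump_right, pow_one]
    have hxpart : myP x hxx (fun i' => (d + Finsupp.single (Sum.inr i) 1 : (Fin n ⊕ Fin n) →₀ ℕ) (Sum.inl i')) =
        myP x hxx (fun i' => d (Sum.inl i')) :=
      myP_congr _ _ (fun i' => by simp [Finsupp.single_apply])
    rw [hxpart, hppart, mul_assoc]

lemma NL3 (hpx : ∀ i j, p i * x j - x j * p i = if i = j then (1 : B) else 0)
    (hNm : ∀ d : (Fin n ⊕ Fin n) →₀ ℕ, N (monomial d (1:k)) =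
      myP x hxx (fun i => d (Sum.inl i)) * myP p hpp (fun i => d (Sum.inr i)))
    (j : Fin n) (f : MvPolynomial (Fin n ⊕ Fin n) k) :
    N f * x j = x j * N f + N (pderiv (Sum.inr j) f) := by
  have hz : ∀ i, i ≠ j → Commute (x j) (p i) := by
    intro i hij
    have h := hpx i j
    rw [if_neg hij] at h
    exact (sub_eq_zero.mp h).symm
  have hj : p j * x j = x j * p j + 1 := by
    have h := hpx j j
    rw [if_pos rfl, sub_eq_iff_eq_add] at h
    rw [h, add_comm]
  induction f using MvPolynomial.induction_on' with
  | add f g hf hg =>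
    rw [map_add, add_mul, hf, hg, map_add, map_add, mul_add]
    abel
  | monomial d a =>
    rw [mon_smul, map_smul, Derivation.map_smul, map_smul, smul_mul_assoc, mul_smul_comm, ← smul_add]
    congr 1
    rw [hNm, pderiv_monomial, one_mul, mon_smul, map_smul, hNm]
    set dx : Fin n → ℕ := fun i' => d (Sum.inl i') with hdx
    set dp : Fin n → ℕ := fun i' => d (Sum.inr i') with hdp
    have hxpart : myP x hxx (fun i' => (d - Finsupp.single (Sum.inr j) 1 : (Fin n ⊕ Fin n) →₀ ℕ) (Sum.inl i')) =
        myP x hxx dx :=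
      myP_congr _ _ (fun i' => by simp [Finsupp.tsub_apply, Finsupp.single_apply, hdx])
    have hppart : myP p hpp (fun i' => (d - Finsupp.single (Sum.inr j) 1 : (Fin n ⊕ Fin n) →₀ ℕ) (Sum.inr i')) =
        myP p hpp (Function.update dp j (dp j - 1)) :=
      myP_congr _ _ (fun i' => by
        rcases eq_or_ne i' j with hii | hii
        · subst hii; simp [Finsupp.tsub_apply, Finsupp.single_apply, hdp]
        · simp [Finsupp.tsub_apply, Finsupp.single_apply, hii, Ne.symm hii,
            Function.update_of_ne hii, hdp])
    rw [hxpart, hppart]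
    have hkey := myP_mul_right p hpp dp j (x j) (fun i hij => hz i hij) hj
    have hcx : x j * myP x hxx dx = myP x hxx dx * x j :=
      (myP_commute x hxx dx (x j) (fun i => hxx j i)).eq
    rw [mul_assoc, hkey, mul_add, ← mul_assoc, ← hcx, mul_smul_comm, mul_assoc,
      Nat.cast_smul_eq_nsmul k (d (Sum.inr j))]

lemma NL4 (hpx : ∀ i j, p i * x j - x j * p i = if i = j then (1 : B) else 0)
    (hNm : ∀ d : (Fin n ⊕ Fin n) →₀ ℕ, N (monomial d (1:k)) =
      myP x hxx (fun i => d (Sum.inl i)) * myP p hpp (fun i => d (Sum.inr i)))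
    (j : Fin n) (f : MvPolynomial (Fin n ⊕ Fin n) k) :
    p j * N f = N f * p j + N (pderiv (Sum.inl j) f) := by
  have hz : ∀ i, i ≠ j → Commute (p j) (x i) := by
    intro i hij
    have h := hpx j i
    rw [if_neg (Ne.symm hij)] at h
    exact sub_eq_zero.mp h
  have hj : p j * x j = x j * p j + 1 := by
    have h := hpx j j
    rw [if_pos rfl, sub_eq_iff_eq_add] at h
    rw [h, add_comm]
  induction f using MvPolynomial.induction_on' with
  | add f g hf hg =>
    rw [map_add, mul_add, hf, hg, map_add, map_add, add_mul]
    abel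
  | monomial d a =>
    rw [mon_smul, map_smul, Derivation.map_smul, map_smul, smul_mul_assoc, mul_smul_comm, ← smul_add]
    congr 1
    rw [hNm, pderiv_monomial, one_mul, mon_smul, map_smul, hNm]
    set dx : Fin n → ℕ := fun i' => d (Sum.inl i') with hdx
    set dp : Fin n → ℕ := fun i' => d (Sum.inr i') with hdp
    have hppart : myP p hpp (fun i' => (d - Finsupp.single (Sum.inl j) 1 : (Fin n ⊕ Fin n) →₀ ℕ) (Sum.inr i')) =
        myP p hpp dp :=
      myP_congr _ _ (fun i' => by simp [Finsupp.tsub_apply, Finsupp.single_apply, hdp])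
    have hxpart : myP x hxx (fun i' => (d - Finsupp.single (Sum.inl j) 1 : (Fin n ⊕ Fin n) →₀ ℕ) (Sum.inl i')) =
        myP x hxx (Function.update dx j (dx j - 1)) :=
      myP_congr _ _ (fun i' => by
        rcases eq_or_ne i' j with hii | hii
        · subst hii; simp [Finsupp.tsub_apply, Finsupp.single_apply, hdx]
        · simp [Finsupp.tsub_apply, Finsupp.single_apply, hii, Ne.symm hii,
            Function.update_of_ne hii, hdx])
    rw [hxpart, hppart]
    have hkey := mul_myP_left x hxx dx j (p j) (fun i hij => hz i hij) hj
    have hcp : p j * myP p hpp dp = myP p hpp dp * p j :=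
      (myP_commute p hpp dp (p j) (fun i => hpp j i)).eq
    rw [← mul_assoc, hkey, add_mul, mul_assoc, hcp, ← mul_assoc, smul_mul_assoc,
      Nat.cast_smul_eq_nsmul k (d (Sum.inl j))]
end MyAux4


section MyAux5
set_option linter.unusedSectionVars false
open PowerSeries

variable {k : Type*} [Field k] [CharZero k] {σ : Type*} {B : Type*} [Ring B] [Algebra k B]
variable (N : MvPolynomial σ k →ₗ[k] B)

lemma coeff_liftFun (q : PowerSeries (MvPolynomial σ k)) (m : ℕ) :
    PowerSeries.coeff (R := B) m (liftFun N q) = N (PowerSeries.coeff m q) := by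
  rw [liftFun, PowerSeries.coeff_mk]

lemma liftFun_sum {ι : Type*} (s : Finset ι) (g : ι → PowerSeries (MvPolynomial σ k)) :
    liftFun N (∑ i ∈ s, g i) = ∑ i ∈ s, liftFun N (g i) := by
  refine PowerSeries.ext fun m => ?_
  rw [coeff_liftFun, map_sum, map_sum, map_sum]
  exact Finset.sum_congr rfl fun i _ => (coeff_liftFun N (g i) m).symm

lemma liftFun_left (c : MvPolynomial σ k) (u : B) (h : ∀ f, N (c * f) = u * N f)
    (q : PowerSeries (MvPolynomial σ k)) :
    liftFun N (PowerSeries.C c * q) = PowerSeries.C (R := B) u * liftFun N q := by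
  refine PowerSeries.ext fun m => ?_
  rw [coeff_liftFun, PowerSeries.coeff_C_mul, PowerSeries.coeff_C_mul, coeff_liftFun, h]

lemma liftFun_right (c : MvPolynomial σ k) (u : B) (h : ∀ f, N (f * c) = N f * u)
    (q : PowerSeries (MvPolynomial σ k)) :
    liftFun N (q * PowerSeries.C c) = liftFun N q * PowerSeries.C (R := B) u := by
  refine PowerSeries.ext fun m => ?_
  rw [coeff_liftFun, PowerSeries.coeff_mul_C, PowerSeries.coeff_mul_C, coeff_liftFun, h]

lemma liftFun_defect (v : σ) (z : B)
    (h : ∀ f, N f * z = z * N f + N (MvPolynomial.pderiv v f))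
    (q : PowerSeries (MvPolynomial σ k)) :
    liftFun N q * PowerSeries.C (R := B) z =
      PowerSeries.C (R := B) z * liftFun N q + liftFun N (Dps v q) := by
  refine PowerSeries.ext fun m => ?_
  rw [map_add, PowerSeries.coeff_mul_C, PowerSeries.coeff_C_mul, coeff_liftFun, coeff_liftFun,
    coeff_Dps, h]

lemma liftFun_defect' (v : σ) (z : B)
    (h : ∀ f, z * N f = N f * z + N (MvPolynomial.pderiv v f))
    (q : PowerSeries (MvPolynomial σ k)) :
    PowerSeries.C (R := B) z * liftFun N q =
      liftFun N q * PowerSeries.C (R := B) z + liftFun N (Dps v q) := by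
  refine PowerSeries.ext fun m => ?_
  rw [map_add, PowerSeries.coeff_mul_C, PowerSeries.coeff_C_mul, coeff_liftFun, coeff_liftFun,
    coeff_Dps, h]

lemma liftFun_scalar (s : PowerSeries k) (q : PowerSeries (MvPolynomial σ k)) :
    liftFun N (PowerSeries.map (MvPolynomial.C) s * q) =
      PowerSeries.map (algebraMap k B) s * liftFun N q := by
  refine PowerSeries.ext fun m => ?_
  rw [coeff_liftFun, PowerSeries.coeff_mul, PowerSeries.coeff_mul, map_sum]
  refine Finset.sum_congr rfl ?_
  rintro ⟨a, b⟩ _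
  rw [PowerSeries.coeff_map, PowerSeries.coeff_map, coeff_liftFun,
    MvPolynomial.C_mul', map_smul, Algebra.smul_def]

lemma Dps_C_mul_map (v : σ) (c : MvPolynomial σ k) (s : PowerSeries k) :
    Dps v (PowerSeries.C c * PowerSeries.map (MvPolynomial.C) s) =
      PowerSeries.C (MvPolynomial.pderiv v c) * PowerSeries.map (MvPolynomial.C) s := by
  refine PowerSeries.ext fun m => ?_
  rw [coeff_Dps, PowerSeries.coeff_C_mul, PowerSeries.coeff_C_mul, PowerSeries.coeff_map,
    MvPolynomial.pderiv_mul, MvPolynomial.pderiv_C, mul_zero, add_zero]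

lemma C_mul_map_comm (s : PowerSeries k) (b : B) :
    PowerSeries.C (R := B) b * PowerSeries.map (algebraMap k B) s =
      PowerSeries.map (algebraMap k B) s * PowerSeries.C (R := B) b := by
  refine PowerSeries.ext fun m => ?_
  rw [PowerSeries.coeff_C_mul, PowerSeries.coeff_mul_C, PowerSeries.coeff_map]
  exact (Algebra.commutes _ _).symm

end MyAux5

/-- for `A ∈ 𝒜_n(k)`, `φ(A)` is invertible and
`φ(A)·x_j·φ(A)⁻¹ = Σ_i x_i·A_{ij}`, `φ(A)·p_j·φ(A)⁻¹ = Σ_i p_i·(A⁻¹)_{ji}`. -/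
theorem statement4 {k : Type*} [Field k] [CharZero k]
    {n : ℕ} {B : Type*} [Ring B] [Algebra k B]
    (x p : Fin n → B)
    (hxx : ∀ i j, x i * x j = x j * x i)
    (hpp : ∀ i j, p i * p j = p j * p i)
    (hpx : ∀ i j, p i * x j - x j * p i = if i = j then (1 : B) else 0)
    (N : MvPolynomial (Fin n ⊕ Fin n) k →ₗ[k] B) (hN : IsNormalOrdering x p N)
    (A : Matrix (Fin n) (Fin n) (PowerSeries k)) (hA : IsOneModH A) :
    ∃ φinv : PowerSeries B,
      phiMat N A * φinv = 1 ∧ φinv * phiMat N A = 1 ∧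
      (∀ j : Fin n,
        phiMat N A * PowerSeries.C (R := B) (x j) * φinv =
          ∑ i : Fin n, PowerSeries.C (R := B) (x i) * PowerSeries.map (algebraMap k B) (A i j)) ∧
      (∀ j : Fin n,
        phiMat N A * PowerSeries.C (R := B) (p j) * φinv =
          ∑ i : Fin n, PowerSeries.C (R := B) (p i) * PowerSeries.map (algebraMap k B) (A⁻¹ j i)) := by
  classical
  set E : PowerSeries (MvPolynomial (Fin n ⊕ Fin n) k) := ∑ i : Fin n, ∑ j : Fin n,
    PowerSeries.C (R := (MvPolynomial (Fin n ⊕ Fin n) k))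
        (MvPolynomial.X (Sum.inl i) * MvPolynomial.X (Sum.inr j)) *
      PowerSeries.map (MvPolynomial.C) ((A - 1) i j) with hE
  have hphi : phiMat N A = liftFun N (psExp E) := rfl
  have hxc : ∀ a b, Commute (x a) (x b) := hxx
  have hpc : ∀ a b, Commute (p a) (p b) := hpp
  have hNm : ∀ d : (Fin n ⊕ Fin n) →₀ ℕ, N (MvPolynomial.monomial d (1:k)) =
      myP x hxc (fun i => d (Sum.inl i)) * myP p hpc (fun i => d (Sum.inr i)) := by
    intro d
    rw [hN d, myP_eq_list, myP_eq_list]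
  have hMap0 : ∀ i j : Fin n, PowerSeries.constantCoeff (R := k) ((A - 1) i j) = 0 := by
    intro i j
    have h1 : (A - 1) i j = A i j - (1 : Matrix (Fin n) (Fin n) (PowerSeries k)) i j :=
      Matrix.sub_apply _ _ _ _
    rw [h1, map_sub, hA i j, Matrix.one_apply]
    split <;> simp
  have hconstE : PowerSeries.constantCoeff E = 0 := by
    rw [hE, map_sum]
    refine Finset.sum_eq_zero fun i _ => ?_
    rw [map_sum]
    refine Finset.sum_eq_zero fun j _ => ?_
    rw [map_mul]
    have h2 : PowerSeries.constantCoeff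
        (PowerSeries.map (MvPolynomial.C (σ := Fin n ⊕ Fin n)) ((A - 1) i j)) = 0 := by
      rw [← PowerSeries.coeff_zero_eq_constantCoeff_apply, PowerSeries.coeff_map,
        PowerSeries.coeff_zero_eq_constantCoeff_apply, hMap0 i j, map_zero]
    rw [h2, mul_zero]
  have hc1 : PowerSeries.constantCoeff (R := B) (phiMat N A) = 1 := by
    rw [hphi, ← PowerSeries.coeff_zero_eq_constantCoeff_apply, coeff_liftFun]
    have h3 : PowerSeries.coeff 0 (psExp E) = 1 := by
      rw [psExp, PowerSeries.coeff_mk]; simp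
    rw [h3, NL_one hxc hpc hNm]
  obtain ⟨ψ, hψ1, hψ2⟩ := myExistsInv _ hc1
  -- derivative computations
  have hDr : ∀ j : Fin n, Dps (Sum.inr j) E = ∑ i : Fin n,
      PowerSeries.C (MvPolynomial.X (Sum.inl i)) *
        PowerSeries.map (MvPolynomial.C) ((A - 1) i j) := by
    intro j
    rw [hE, Dps_sum]
    refine Finset.sum_congr rfl fun i _ => ?_
    rw [Dps_sum]
    have hterm : ∀ j' : Fin n, Dps (Sum.inr j)
        (PowerSeries.C (MvPolynomial.X (Sum.inl i) * MvPolynomial.X (Sum.inr j')) *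
          PowerSeries.map (MvPolynomial.C) ((A - 1) i j')) =
        if j' = j then PowerSeries.C (MvPolynomial.X (Sum.inl i)) *
          PowerSeries.map (MvPolynomial.C) ((A - 1) i j') else 0 := by
      intro j'
      rw [Dps_C_mul_map, MvPolynomial.pderiv_mul]
      have e1 : (MvPolynomial.pderiv (Sum.inr j : Fin n ⊕ Fin n))
          (MvPolynomial.X (Sum.inl i) : MvPolynomial (Fin n ⊕ Fin n) k) = 0 := by
        rw [MvPolynomial.pderiv_X]
        exact Pi.single_eq_of_ne (by simp) 1
      have e2 : (MvPolynomial.pderiv (Sum.inr j : Fin n ⊕ Fin n))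
          (MvPolynomial.X (Sum.inr j') : MvPolynomial (Fin n ⊕ Fin n) k) =
          if j' = j then 1 else 0 := by
        rw [MvPolynomial.pderiv_X]
        rcases eq_or_ne j' j with h | h
        · subst h; simp
        · rw [Pi.single_eq_of_ne (by simpa using h) 1, if_neg h]
      rw [e1, e2, zero_mul, zero_add]
      rcases eq_or_ne j' j with h | h
      · subst h; rw [if_pos rfl, if_pos rfl, mul_one]
      · rw [if_neg h, if_neg h, mul_zero, map_zero, zero_mul]
    rw [Finset.sum_congr rfl fun j' _ => hterm j',
      Finset.sum_ite_eq' Finset.univ j, if_pos (Finset.mem_univ j)]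
  have hDl : ∀ j : Fin n, Dps (Sum.inl j) E = ∑ i : Fin n,
      PowerSeries.C (MvPolynomial.X (Sum.inr i)) *
        PowerSeries.map (MvPolynomial.C) ((A - 1) j i) := by
    intro j
    rw [hE, Dps_sum]
    have hterm : ∀ i j' : Fin n, Dps (Sum.inl j)
        (PowerSeries.C (MvPolynomial.X (Sum.inl i) * MvPolynomial.X (Sum.inr j')) *
          PowerSeries.map (MvPolynomial.C) ((A - 1) i j')) =
        if i = j then PowerSeries.C (MvPolynomial.X (Sum.inr j')) *
          PowerSeries.map (MvPolynomial.C) ((A - 1) i j') else 0 := by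
      intro i j'
      rw [Dps_C_mul_map, MvPolynomial.pderiv_mul]
      have e1 : (MvPolynomial.pderiv (Sum.inl j : Fin n ⊕ Fin n))
          (MvPolynomial.X (Sum.inl i) : MvPolynomial (Fin n ⊕ Fin n) k) =
          if i = j then 1 else 0 := by
        rw [MvPolynomial.pderiv_X]
        rcases eq_or_ne i j with h | h
        · subst h; simp
        · rw [Pi.single_eq_of_ne (by simpa using h) 1, if_neg h]
      have e2 : (MvPolynomial.pderiv (Sum.inl j : Fin n ⊕ Fin n))
          (MvPolynomial.X (Sum.inr j') : MvPolynomial (Fin n ⊕ Fin n) k) = 0 := by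
        rw [MvPolynomial.pderiv_X]
        exact Pi.single_eq_of_ne (by simp) 1
      rw [e1, e2, mul_zero, add_zero]
      rcases eq_or_ne i j with h | h
      · subst h; rw [if_pos rfl, if_pos rfl, one_mul]
      · rw [if_neg h, if_neg h, zero_mul, map_zero, zero_mul]
    have hsum : ∀ i : Fin n, Dps (Sum.inl j) (∑ j' : Fin n,
        PowerSeries.C (MvPolynomial.X (Sum.inl i) * MvPolynomial.X (Sum.inr j')) *
          PowerSeries.map (MvPolynomial.C) ((A - 1) i j')) =
        if i = j then (∑ j' : Fin n, PowerSeries.C (MvPolynomial.X (Sum.inr j')) *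
          PowerSeries.map (MvPolynomial.C) ((A - 1) i j')) else 0 := by
      intro i
      rw [Dps_sum, Finset.sum_congr rfl fun j' _ => hterm i j']
      rcases eq_or_ne i j with h | h
      · subst h
        rw [if_pos rfl]
        exact Finset.sum_congr rfl fun j' _ => if_pos rfl
      · rw [if_neg h]
        exact Finset.sum_eq_zero fun j' _ => if_neg h
    rw [Finset.sum_congr rfl fun i _ => hsum i,
      Finset.sum_ite_eq' Finset.univ j, if_pos (Finset.mem_univ j)]
  -- the two key multiplicative identities
  have hMsub : ∀ i j : Fin n, PowerSeries.map (algebraMap k B) ((A - 1) i j) =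
      PowerSeries.map (algebraMap k B) (A i j) - (if i = j then 1 else 0) := by
    intro i j
    have h1 : (A - 1) i j = A i j - (1 : Matrix (Fin n) (Fin n) (PowerSeries k)) i j :=
      Matrix.sub_apply _ _ _ _
    rw [h1, map_sub, Matrix.one_apply]
    congr 1
    split <;> simp
  have Kx : ∀ j : Fin n, phiMat N A * PowerSeries.C (R := B) (x j) =
      ∑ i : Fin n, PowerSeries.C (R := B) (x i) * PowerSeries.map (algebraMap k B) (A i j) *
        phiMat N A := by
    intro j
    have step1 : phiMat N A * PowerSeries.C (R := B) (x j) =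
        PowerSeries.C (R := B) (x j) * phiMat N A + liftFun N (Dps (Sum.inr j) (psExp E)) := by
      rw [hphi]
      exact liftFun_defect N (Sum.inr j) (x j) (fun f => NL3 hxc hpc hpx hNm j f) (psExp E)
    rw [step1, Dps_psExp _ hconstE, hDr j, Finset.mul_sum]
    have step2 : ∀ i : Fin n, psExp E * (PowerSeries.C (MvPolynomial.X (Sum.inl i)) *
        PowerSeries.map (MvPolynomial.C) ((A - 1) i j)) =
        PowerSeries.C (MvPolynomial.X (Sum.inl i)) *
          (PowerSeries.map (MvPolynomial.C) ((A - 1) i j) * psExp E) := by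
      intro i; ring
    have hlift : liftFun N (∑ i : Fin n, psExp E *
        (PowerSeries.C (MvPolynomial.X (Sum.inl i)) *
          PowerSeries.map (MvPolynomial.C) ((A - 1) i j))) =
        ∑ i : Fin n, PowerSeries.C (R := B) (x i) *
          (PowerSeries.map (algebraMap k B) ((A - 1) i j) * phiMat N A) := by
      rw [liftFun_sum]
      refine Finset.sum_congr rfl fun i _ => ?_
      rw [step2 i, liftFun_left N _ _ (fun f => NL1 hxc hpc hNm i f), liftFun_scalar, hphi]
    rw [hlift]
    have expand : ∀ i : Fin n, PowerSeries.C (R := B) (x i) *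
        (PowerSeries.map (algebraMap k B) ((A - 1) i j) * phiMat N A) =
        PowerSeries.C (R := B) (x i) * PowerSeries.map (algebraMap k B) (A i j) * phiMat N A -
          (if i = j then PowerSeries.C (R := B) (x j) * phiMat N A else 0) := by
      intro i
      rw [hMsub i j, sub_mul, mul_sub, ← mul_assoc]
      congr 1
      rcases eq_or_ne i j with h | h
      · subst h; rw [if_pos rfl, if_pos rfl, one_mul]
      · rw [if_neg h, if_neg h, zero_mul, mul_zero]
    rw [Finset.sum_congr rfl fun i _ => expand i, Finset.sum_sub_distrib,
      Finset.sum_ite_eq' Finset.univ j, if_pos (Finset.mem_univ j)]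
    abel
  have Kp : ∀ j : Fin n, PowerSeries.C (R := B) (p j) * phiMat N A =
      ∑ i : Fin n, PowerSeries.map (algebraMap k B) (A j i) *
        (phiMat N A * PowerSeries.C (R := B) (p i)) := by
    intro j
    have step1 : PowerSeries.C (R := B) (p j) * phiMat N A =
        phiMat N A * PowerSeries.C (R := B) (p j) + liftFun N (Dps (Sum.inl j) (psExp E)) := by
      rw [hphi]
      exact liftFun_defect' N (Sum.inl j) (p j) (fun f => NL4 hxc hpc hpx hNm j f) (psExp E)
    rw [step1, Dps_psExp _ hconstE, hDl j, Finset.mul_sum]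
    have step2 : ∀ i : Fin n, psExp E * (PowerSeries.C (MvPolynomial.X (Sum.inr i)) *
        PowerSeries.map (MvPolynomial.C) ((A - 1) j i)) =
        PowerSeries.map (MvPolynomial.C) ((A - 1) j i) *
          (psExp E * PowerSeries.C (MvPolynomial.X (Sum.inr i))) := by
      intro i; ring
    have hlift : liftFun N (∑ i : Fin n, psExp E *
        (PowerSeries.C (MvPolynomial.X (Sum.inr i)) *
          PowerSeries.map (MvPolynomial.C) ((A - 1) j i))) =
        ∑ i : Fin n, PowerSeries.map (algebraMap k B) ((A - 1) j i) *
          (phiMat N A * PowerSeries.C (R := B) (p i)) := by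
      rw [liftFun_sum]
      refine Finset.sum_congr rfl fun i _ => ?_
      rw [step2 i, liftFun_scalar, liftFun_right N _ _ (fun f => NL2 hxc hpc hNm i f), hphi]
    rw [hlift]
    have expand : ∀ i : Fin n, PowerSeries.map (algebraMap k B) ((A - 1) j i) *
        (phiMat N A * PowerSeries.C (R := B) (p i)) =
        PowerSeries.map (algebraMap k B) (A j i) * (phiMat N A * PowerSeries.C (R := B) (p i)) -
          (if i = j then phiMat N A * PowerSeries.C (R := B) (p j) else 0) := by
      intro i
      rw [hMsub j i, sub_mul]
      congr 1
      rcases eq_or_ne i j with h | h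
      · subst h; rw [if_pos rfl, if_pos rfl, one_mul]
      · have h' : ¬ (j = i) := fun hh => h hh.symm
        rw [if_neg h', if_neg h, zero_mul]
    rw [Finset.sum_congr rfl fun i _ => expand i, Finset.sum_sub_distrib,
      Finset.sum_ite_eq' Finset.univ j, if_pos (Finset.mem_univ j)]
    abel
  -- invertibility of A
  have hdet : IsUnit A.det := by
    rw [PowerSeries.isUnit_iff_constantCoeff]
    have h1 : PowerSeries.constantCoeff (R := k) A.det =
        (A.map (PowerSeries.constantCoeff (R := k))).det := RingHom.map_det _ _
    have h2 : A.map (PowerSeries.constantCoeff (R := k)) = 1 := by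
      ext i j
      rw [Matrix.map_apply, hA i j, Matrix.one_apply]
    rw [h1, h2, Matrix.det_one]
    exact isUnit_one
  have hAinv : ∀ j m : Fin n, (∑ i : Fin n, A⁻¹ j i * A i m) =
      if j = m then 1 else 0 := by
    intro j m
    have h := Matrix.nonsing_inv_mul A hdet
    have h2 : (A⁻¹ * A) j m = (1 : Matrix (Fin n) (Fin n) (PowerSeries k)) j m := by rw [h]
    rw [Matrix.mul_apply] at h2
    rw [h2, Matrix.one_apply]
  have Kp2 : ∀ j : Fin n, phiMat N A * PowerSeries.C (R := B) (p j) =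
      ∑ i : Fin n, PowerSeries.map (algebraMap k B) (A⁻¹ j i) *
        (PowerSeries.C (R := B) (p i) * phiMat N A) := by
    intro j
    symm
    calc ∑ i : Fin n, PowerSeries.map (algebraMap k B) (A⁻¹ j i) *
          (PowerSeries.C (R := B) (p i) * phiMat N A)
        = ∑ i : Fin n, ∑ m : Fin n, PowerSeries.map (algebraMap k B) (A⁻¹ j i) *
            (PowerSeries.map (algebraMap k B) (A i m) *
              (phiMat N A * PowerSeries.C (R := B) (p m))) := by
          refine Finset.sum_congr rfl fun i _ => ?_
          rw [Kp i, Finset.mul_sum]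
      _ = ∑ m : Fin n, (∑ i : Fin n, PowerSeries.map (algebraMap k B) (A⁻¹ j i * A i m)) *
            (phiMat N A * PowerSeries.C (R := B) (p m)) := by
          rw [Finset.sum_comm]
          refine Finset.sum_congr rfl fun m _ => ?_
          rw [Finset.sum_mul]
          refine Finset.sum_congr rfl fun i _ => ?_
          rw [map_mul, mul_assoc]
      _ = ∑ m : Fin n, (if j = m then (1 : PowerSeries B) else 0) *
            (phiMat N A * PowerSeries.C (R := B) (p m)) := by
          refine Finset.sum_congr rfl fun m _ => ?_
          congr 1
          rw [← map_sum, hAinv j m]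
          split <;> simp
      _ = phiMat N A * PowerSeries.C (R := B) (p j) := by
          rw [Finset.sum_congr rfl fun m _ =>
            (by rw [ite_mul, one_mul, zero_mul] :
              (if j = m then (1 : PowerSeries B) else 0) *
                (phiMat N A * PowerSeries.C (R := B) (p m)) =
              if j = m then phiMat N A * PowerSeries.C (R := B) (p m) else 0)]
          rw [Finset.sum_ite_eq Finset.univ j, if_pos (Finset.mem_univ j)]
  refine ⟨ψ, hψ1, hψ2, ?_, ?_⟩
  · intro j
    rw [Kx j, Finset.sum_mul]
    refine Finset.sum_congr rfl fun i _ => ?_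
    rw [mul_assoc, hψ1, mul_one]
  · intro j
    rw [Kp2 j, Finset.sum_mul]
    refine Finset.sum_congr rfl fun i _ => ?_
    rw [mul_assoc, mul_assoc, hψ1, mul_one, C_mul_map_comm]
end
end

section
/- Define the operators on L: E := i·T₁·(multiplication by x^{−1})∘(1 + q T₂ D₋), F := i·T₁·(multiplication by x)∘(1 + q T₂ D₊), K := T₁² T₂·D₋, K' := T₁² T₂·D₊. Then: K E = q² E K, K F = q^{−2} F K, K' E = q^{−2} E K', K' F = q² F K', K K' = K' K = T₁⁴ T₂²·Id, and E F − F E = (q − q^{−1})(K − K'). In particular K K' = Id if and only if T₁² T₂ = ±1. -/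
noncomputable section

private lemma end_ext_T {k : Type*} [Field k] (f g : Module.End k (LaurentPolynomial k))
    (h : ∀ m : ℤ, f (LaurentPolynomial.T m) = g (LaurentPolynomial.T m)) : f = g := by
  apply AddMonoidAlgebra.lhom_ext'
  intro a
  apply LinearMap.ext; intro b
  simp only [LinearMap.comp_apply, AddMonoidAlgebra.lsingle_apply]
  have hs : (AddMonoidAlgebra.single a b : LaurentPolynomial k) = b • LaurentPolynomial.T a := by
    rw [LaurentPolynomial.T, AddMonoidAlgebra.smul_single, smul_eq_mul, mul_one]
  rw [hs, map_smul, map_smul]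
  exact congrArg (fun z => b • z) (h a)

private lemma T_smul_inj {k : Type*} [Field k] (a b : k) (m : ℤ)
    (h : a • (LaurentPolynomial.T m : LaurentPolynomial k) = b • LaurentPolynomial.T m) :
    a = b := by
  rw [LaurentPolynomial.T, AddMonoidAlgebra.smul_single, AddMonoidAlgebra.smul_single] at h
  have := AddMonoidAlgebra.single_right_injective h
  simpa using this

/-- the operators `E = i T₁ x⁻¹ (1 + q T₂ D₋)`, `F = i T₁ x (1 + q T₂ D₊)`,
`K = T₁² T₂ D₋`, `K' = T₁² T₂ D₊` on the Laurent polynomials `L = k[x, x⁻¹]` satisfy the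
defining relations of the Drinfeld double 𝔇 of the quantum Borel of sl₂:
`KE = q²EK`, `KF = q⁻²FK`, `K'E = q⁻²EK'`, `K'F = q²FK'`, `KK' = K'K = T₁⁴T₂²·Id`,
`EF − FE = (q − q⁻¹)(K − K')`; and `KK' = Id` iff `T₁²T₂ = ±1`. -/
theorem statement11 {k : Type*} [Field k] (q T₁ T₂ i : k)
    (hq : q ≠ 0) (hT₁ : T₁ ≠ 0) (hT₂ : T₂ ≠ 0) (hi : i ^ 2 = -1)
    (Dp Dm : Module.End k (LaurentPolynomial k))
    (hDp : ∀ m : ℤ, Dp (LaurentPolynomial.T m) = q ^ (2 * m) • LaurentPolynomial.T m)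
    (hDm : ∀ m : ℤ, Dm (LaurentPolynomial.T m) = q ^ (-(2 * m)) • LaurentPolynomial.T m) :
    let E : Module.End k (LaurentPolynomial k) :=
      (i * T₁) • (LinearMap.mulLeft k (LaurentPolynomial.T (-1)) * (1 + (q * T₂) • Dm))
    let F : Module.End k (LaurentPolynomial k) :=
      (i * T₁) • (LinearMap.mulLeft k (LaurentPolynomial.T 1) * (1 + (q * T₂) • Dp))
    let K : Module.End k (LaurentPolynomial k) := (T₁ ^ 2 * T₂) • Dm
    let K' : Module.End k (LaurentPolynomial k) := (T₁ ^ 2 * T₂) • Dp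
    K * E = q ^ 2 • (E * K) ∧
    K * F = q ^ (-2 : ℤ) • (F * K) ∧
    K' * E = q ^ (-2 : ℤ) • (E * K') ∧
    K' * F = q ^ 2 • (F * K') ∧
    K * K' = K' * K ∧
    K * K' = (T₁ ^ 4 * T₂ ^ 2) • (1 : Module.End k (LaurentPolynomial k)) ∧
    E * F - F * E = (q - q⁻¹) • (K - K') ∧
    (K * K' = 1 ↔ (T₁ ^ 2 * T₂ = 1 ∨ T₁ ^ 2 * T₂ = -1)) := by
  intro E F K K'
  have hu : ∀ m : ℤ, q ^ (2 * m) ≠ 0 := fun m => zpow_ne_zero _ hq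
  have hz1 : ∀ m : ℤ, q ^ (-(2 * m)) = (q ^ (2 * m))⁻¹ := fun m => by rw [zpow_neg]
  have hz2 : ∀ m : ℤ, q ^ (2 * (m + 1)) = q ^ (2 * m) * q ^ 2 := fun m => by
    rw [mul_add, mul_one, zpow_add₀ hq, zpow_two, ← sq]
  have hz3 : ∀ m : ℤ, q ^ (2 * (m - 1)) = q ^ (2 * m) * (q ^ 2)⁻¹ := fun m => by
    rw [mul_sub, mul_one, zpow_sub₀ hq, zpow_two, ← sq, div_eq_mul_inv]
  have hzneg : q ^ (-2 : ℤ) = (q ^ 2)⁻¹ := by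
    rw [zpow_neg, zpow_two, ← sq]
  have hTmul : ∀ a b : ℤ,
      (LaurentPolynomial.T a : LaurentPolynomial k) * LaurentPolynomial.T b
        = LaurentPolynomial.T (a + b) := fun a b => (LaurentPolynomial.T_add a b).symm
  have hidx1 : ∀ m : ℤ, (-1) + m = m - 1 := fun m => by ring
  have hidx2 : ∀ m : ℤ, (1 : ℤ) + m = m + 1 := fun m => by ring
  have hidx3 : ∀ m : ℤ, m + 1 - 1 = m := fun m => by ring
  have hidx4 : ∀ m : ℤ, m - 1 + 1 = m := fun m => by ring
  have hE : ∀ m : ℤ, E (LaurentPolynomial.T m) =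
      (i * T₁ * (1 + q * T₂ * (q ^ (2 * m))⁻¹)) • LaurentPolynomial.T (m - 1) := by
    intro m
    simp only [E, LinearMap.smul_apply, Module.End.mul_apply, LinearMap.add_apply,
      Module.End.one_apply, LinearMap.mulLeft_apply, hDm, hz1, mul_add, mul_smul_comm,
      smul_add, smul_smul, hTmul, hidx1, add_mul, one_mul, add_smul]
    ring_nf
  have hF : ∀ m : ℤ, F (LaurentPolynomial.T m) =
      (i * T₁ * (1 + q * T₂ * q ^ (2 * m))) • LaurentPolynomial.T (m + 1) := by
    intro m
    simp only [F, LinearMap.smul_apply, Module.End.mul_apply, LinearMap.add_apply,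
      Module.End.one_apply, LinearMap.mulLeft_apply, hDp, mul_add, mul_smul_comm,
      smul_add, smul_smul, hTmul, hidx2, add_mul, one_mul, add_smul]
    ring_nf
  have hK : ∀ m : ℤ, K (LaurentPolynomial.T m) =
      (T₁ ^ 2 * T₂ * (q ^ (2 * m))⁻¹) • LaurentPolynomial.T m := by
    intro m
    simp only [K, LinearMap.smul_apply, hDm, hz1, smul_smul]
  have hK' : ∀ m : ℤ, K' (LaurentPolynomial.T m) =
      (T₁ ^ 2 * T₂ * q ^ (2 * m)) • LaurentPolynomial.T m := by
    intro m
    simp only [K', LinearMap.smul_apply, hDp, smul_smul]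
  have hii : i * i = -1 := by rw [← sq]; exact hi
  refine ⟨?_, ?_, ?_, ?_, ?_, ?_, ?_, ?_⟩
  · apply end_ext_T; intro m
    simp only [Module.End.mul_apply, LinearMap.smul_apply, hE, hK, map_smul, smul_smul, hz3]
    congr 1
    field_simp
  · apply end_ext_T; intro m
    simp only [Module.End.mul_apply, LinearMap.smul_apply, hF, hK, map_smul, smul_smul, hz2,
      hzneg]
    congr 1
    field_simp
  · apply end_ext_T; intro m
    simp only [Module.End.mul_apply, LinearMap.smul_apply, hE, hK', map_smul, smul_smul, hz3,
      hzneg]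
    congr 1
    field_simp
  · apply end_ext_T; intro m
    simp only [Module.End.mul_apply, LinearMap.smul_apply, hF, hK', map_smul, smul_smul, hz2]
    congr 1
    ring
  · apply end_ext_T; intro m
    simp only [Module.End.mul_apply, hK, hK', map_smul, smul_smul]
    congr 1
    ring
  · apply end_ext_T; intro m
    simp only [Module.End.mul_apply, hK, hK', map_smul, smul_smul, LinearMap.smul_apply,
      Module.End.one_apply]
    congr 1
    rw [show T₁ ^ 2 * T₂ * q ^ (2 * m) * (T₁ ^ 2 * T₂ * (q ^ (2 * m))⁻¹)
        = T₁ ^ 4 * T₂ ^ 2 * (q ^ (2 * m) * (q ^ (2 * m))⁻¹) by ring,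
      mul_inv_cancel₀ (hu m), mul_one]
  · apply end_ext_T; intro m
    simp only [LinearMap.sub_apply, Module.End.mul_apply, hE, hF, hK, hK', map_smul, smul_smul,
      hidx3, hidx4, hz2, hz3, LinearMap.smul_apply, smul_sub, ← sub_smul]
    have hprod : ∀ A B : k, i * T₁ * A * (i * T₁ * B) = -(T₁ ^ 2 * (A * B)) := by
      intro A B
      rw [show i * T₁ * A * (i * T₁ * B) = i * i * (T₁ ^ 2 * (A * B)) by ring, hii]
      ring
    simp only [hprod]
    congr 1
    field_simp [hu m]
    ring
  · constructor
    · intro h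
      have h0 := congrArg (fun f : Module.End k (LaurentPolynomial k) =>
        f (LaurentPolynomial.T 0)) h
      simp only [Module.End.mul_apply, hK, hK', Module.End.one_apply, map_smul, smul_smul,
        mul_zero, zpow_zero, inv_one, mul_one] at h0
      have h2 : T₁ ^ 2 * T₂ * (T₁ ^ 2 * T₂) = 1 :=
        T_smul_inj _ _ 0 (by rw [one_smul]; exact h0)
      exact mul_self_eq_one_iff.mp h2
    · intro h
      apply end_ext_T; intro m
      simp only [Module.End.mul_apply, hK, hK', map_smul, smul_smul, Module.End.one_apply]
      have hc : T₁ ^ 2 * T₂ * q ^ (2 * m) * (T₁ ^ 2 * T₂ * (q ^ (2 * m))⁻¹)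
          = (T₁ ^ 2 * T₂) * (T₁ ^ 2 * T₂) := by
        rw [show T₁ ^ 2 * T₂ * q ^ (2 * m) * (T₁ ^ 2 * T₂ * (q ^ (2 * m))⁻¹)
            = T₁ ^ 2 * T₂ * (T₁ ^ 2 * T₂) * (q ^ (2 * m) * (q ^ (2 * m))⁻¹) by ring,
          mul_inv_cancel₀ (hu m), mul_one]
      rcases h with h | h <;> rw [hc, h] <;> norm_num
end
end
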